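/- Let K be a field, l ≤ n, and A an l×n matrix over K. Let I, K₀ ⊆ {1,…,n} be two l-element subsets such that the l×l submatrices A_I and A_{K₀} (columns indexed by I, resp. K₀, in increasing order) are both invertible. Then the matrix B = A_{K₀}⁻¹·A_I has the property that for each index j with the j-th element of I lying in I ∩ K₀, the j-th column of B is a standard basis vector; consequently det(B) equals, up to sign, the determinant of the submatrix of B with rows indexed by the positions (within K₀) of K₀∖I and columns indexed by the positions (within I) of I∖K₀. -/

import Mathlib

open Matrix

/-- Let `A_S` denote the `l×l` submatrix of columns of `A` indexed by an
`l`-subset `S` (in increasing order), and set `B = A_K₀⁻¹ · A_I`.  Every column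
of `B` corresponding to a shared index of `I` and `K₀` is a standard basis
vector, and `det B` equals, up to sign, the determinant of the submatrix of `B`
with rows the positions (within `K₀`) of `K₀∖I` and columns the positions
(within `I`) of `I∖K₀`. -/
theorem stmt_16 {K : Type*} [Field K] (l n : ℕ) (hln : l ≤ n)
    (A : Matrix (Fin l) (Fin n) K)
    (I K₀ : Finset (Fin n)) (hI : I.card = l) (hK : K₀.card = l)
    (hAI : IsUnit (A.submatrix id fun j : Fin l => ((I.orderIsoOfFin hI j : Fin n))).det)
    (hAK : IsUnit (A.submatrix id fun j : Fin l => ((K₀.orderIsoOfFin hK j : Fin n))).det) :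
    ∀ B : Matrix (Fin l) (Fin l) K,
      B = (A.submatrix id fun j : Fin l => ((K₀.orderIsoOfFin hK j : Fin n)))⁻¹ *
          A.submatrix id (fun j : Fin l => ((I.orderIsoOfFin hI j : Fin n))) →
    (∀ j : Fin l, ((I.orderIsoOfFin hI j : Fin n)) ∈ K₀ →
      ∀ i : Fin l,
        B i j = if ((K₀.orderIsoOfFin hK i : Fin n)) = ((I.orderIsoOfFin hI j : Fin n))
          then 1 else 0) ∧
    ∀ e : {i : Fin l // ((K₀.orderIsoOfFin hK i : Fin n)) ∉ I} ≃
          {j : Fin l // ((I.orderIsoOfFin hI j : Fin n)) ∉ K₀},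
      ∃ ε : K, (ε = 1 ∨ ε = -1) ∧
        B.det = ε * (B.submatrix
          (fun i : {i : Fin l // ((K₀.orderIsoOfFin hK i : Fin n)) ∉ I} => (i : Fin l))
          (fun i : {i : Fin l // ((K₀.orderIsoOfFin hK i : Fin n)) ∉ I} =>
            ((e i : Fin l)))).det := by
  classical
  intro B hB
  set M := A.submatrix id fun j : Fin l => ((K₀.orderIsoOfFin hK j : Fin n)) with hM
  set N := A.submatrix id fun j : Fin l => ((I.orderIsoOfFin hI j : Fin n)) with hN
  have hMinv : M⁻¹ * M = 1 := nonsing_inv_mul M hAK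
  have key : ∀ j : Fin l, ((I.orderIsoOfFin hI j : Fin n)) ∈ K₀ →
      ∀ i : Fin l,
        B i j = if ((K₀.orderIsoOfFin hK i : Fin n)) = ((I.orderIsoOfFin hI j : Fin n))
          then 1 else 0 := by
    intro j hj i
    set m := (K₀.orderIsoOfFin hK).symm ⟨_, hj⟩ with hm
    have hKm : ((K₀.orderIsoOfFin hK m : Fin n)) = (I.orderIsoOfFin hI j : Fin n) := by
      simp [hm]
    have h1 : B i j = (M⁻¹ * M) i m := by
      rw [hB, mul_apply, mul_apply]
      refine Finset.sum_congr rfl fun k _ => ?_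
      congr 1
      simp only [hN, hM, submatrix_apply, id_eq]
      rw [hKm]
    rw [h1, hMinv, one_apply]
    by_cases h : i = m
    · simp [h, hKm]
    · rw [if_neg h, if_neg]
      intro hc
      apply h
      apply (K₀.orderIsoOfFin hK).injective
      exact Subtype.coe_injective (hc.trans hKm.symm)
  refine ⟨key, fun e => ?_⟩
  set p : Fin l → Prop := fun i => ((K₀.orderIsoOfFin hK i : Fin n)) ∈ I with hp
  set q : Fin l → Prop := fun j => ((I.orderIsoOfFin hI j : Fin n)) ∈ K₀ with hq
  have apply_symm_I : ∀ (x : Fin n) (hx : x ∈ I),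
      ((I.orderIsoOfFin hI ((I.orderIsoOfFin hI).symm ⟨x, hx⟩) : Fin n)) = x :=
    fun x hx => congrArg Subtype.val ((I.orderIsoOfFin hI).apply_symm_apply ⟨x, hx⟩)
  have apply_symm_K : ∀ (x : Fin n) (hx : x ∈ K₀),
      ((K₀.orderIsoOfFin hK ((K₀.orderIsoOfFin hK).symm ⟨x, hx⟩) : Fin n)) = x :=
    fun x hx => congrArg Subtype.val ((K₀.orderIsoOfFin hK).apply_symm_apply ⟨x, hx⟩)
  obtain ⟨finv, hIval⟩ : ∃ finv : {i // p i} ≃ {j // q j},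
      ∀ i : {i // p i},
        ((I.orderIsoOfFin hI (finv i : Fin l) : Fin n)) = (K₀.orderIsoOfFin hK i : Fin n) := by
    have memq : ∀ i : {i // p i},
        q ((I.orderIsoOfFin hI).symm ⟨_, i.2⟩ : Fin l) := by
      intro i
      show ((I.orderIsoOfFin hI _ : Fin n)) ∈ K₀
      rw [apply_symm_I]
      exact ((K₀.orderIsoOfFin hK) i.1).2
    have memp : ∀ j : {j // q j},
        p ((K₀.orderIsoOfFin hK).symm ⟨_, j.2⟩ : Fin l) := by
      intro j
      show ((K₀.orderIsoOfFin hK _ : Fin n)) ∈ I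
      rw [apply_symm_K]
      exact ((I.orderIsoOfFin hI) j.1).2
    refine ⟨⟨fun i => ⟨_, memq i⟩, fun j => ⟨_, memp j⟩, fun i => ?_, fun j => ?_⟩, fun i => ?_⟩
    · apply Subtype.ext
      simp only [apply_symm_I, Subtype.coe_eta, OrderIso.symm_apply_apply]
    · apply Subtype.ext
      simp only [apply_symm_K, Subtype.coe_eta, OrderIso.symm_apply_apply]
    · exact apply_symm_I _ i.2
  let g : Equiv.Perm (Fin l) :=
    (Equiv.sumCompl p).symm.trans ((Equiv.sumCongr finv e).trans (Equiv.sumCompl q))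
  have hginl : ∀ i : {i // p i}, g i = (finv i : Fin l) := by
    intro i
    simp only [g, Equiv.trans_apply, Equiv.sumCompl_symm_apply_of_pos i.2,
      Equiv.sumCongr_apply, Sum.map_inl, Equiv.sumCompl_apply_inl]
  have hginr : ∀ i : {i // ¬ p i}, g i = (e i : Fin l) := by
    intro i
    simp only [g, Equiv.trans_apply, Equiv.sumCompl_symm_apply_of_neg i.2,
      Equiv.sumCongr_apply, Sum.map_inr, Equiv.sumCompl_apply_inr]
  -- the reindexed matrix
  set C := (B.submatrix id g).submatrix (Equiv.sumCompl p) (Equiv.sumCompl p) with hC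
  have hCeq : C = fromBlocks 1 (Matrix.of fun i j => C (Sum.inl i) (Sum.inr j)) 0
      (B.submatrix (fun i : {i // ¬ p i} => (i : Fin l)) (fun i : {i // ¬ p i} => (e i : Fin l))) := by
    ext x y
    cases x with
    | inl i =>
      cases y with
      | inl i' =>
        have : C (Sum.inl i) (Sum.inl i') = B i (g i') := by simp [hC]
        rw [this, hginl i']
        have hq' : ((I.orderIsoOfFin hI (finv i' : Fin l) : Fin n)) ∈ K₀ := (finv i').2
        rw [key _ hq', hIval i']
        simp only [fromBlocks_apply₁₁, one_apply]
        by_cases h : i = i'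
        · simp [h]
        · rw [if_neg h, if_neg]
          intro hc
          apply h
          exact Subtype.ext ((K₀.orderIsoOfFin hK).injective (Subtype.coe_injective hc))
      | inr j' => simp [hC]
    | inr i =>
      cases y with
      | inl i' =>
        have : C (Sum.inr i) (Sum.inl i') = B i (g i') := by simp [hC]
        rw [this, hginl i']
        have hq' : ((I.orderIsoOfFin hI (finv i' : Fin l) : Fin n)) ∈ K₀ := (finv i').2
        rw [key _ hq', hIval i']
        simp only [fromBlocks_apply₂₁, Matrix.zero_apply]
        rw [if_neg]
        intro hc
        apply i.2
        have : (i : Fin l) = (i' : Fin l) :=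
          (K₀.orderIsoOfFin hK).injective (Subtype.coe_injective hc)
        rw [this]; exact i'.2
      | inr j' =>
        have : C (Sum.inr i) (Sum.inr j') = B i (g j') := by simp [hC]
        rw [this, hginr j']
        simp [fromBlocks_apply₂₂]
  have hdetC : C.det = (B.submatrix (fun i : {i // ¬ p i} => (i : Fin l))
      (fun i : {i // ¬ p i} => (e i : Fin l))).det := by
    rw [hCeq, det_fromBlocks_zero₂₁, det_one, one_mul]
  have hdetC' : C.det = (B.submatrix id g).det := det_submatrix_equiv_self _ _
  have hperm : (B.submatrix id g).det = (Equiv.Perm.sign g : ℤ) * B.det := by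
    rw [det_permute']
  set D := (B.submatrix (fun i : {i // ¬ p i} => (i : Fin l))
      (fun i : {i // ¬ p i} => (e i : Fin l))) with hD
  have hrel : ((Equiv.Perm.sign g : ℤ) : K) * B.det = D.det := by
    rw [← hdetC, hdetC', hperm]
  rcases Int.units_eq_one_or (Equiv.Perm.sign g) with hs | hs
  · refine ⟨1, Or.inl rfl, ?_⟩
    rw [hs] at hrel
    rw [← hrel]
    push_cast
    ring
  · refine ⟨-1, Or.inr rfl, ?_⟩
    rw [hs] at hrel
    rw [← hrel]
    push_cast
    ring
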